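/- Improved Temple bound at the bottom of the spectrum: Let A be a self-adjoint operator whose smallest spectral point α = λ_min(A) is an isolated eigenvalue with complete eigenspace X, and let β > α be the next-nearest point of the spectrum. Let y ≠ 0 satisfy α < ρ(y) < β, set x = P_X y and S = span{x,y}. Then x ≠ 0, x ≠ y (so dim S = 2) and (β − ρ(y))(ρ(y) − α) ≤ ‖P_S r(y)‖²/‖y‖². -/

import Mathlib

open scoped RealInnerProductSpace
open Submodule

noncomputable section

variable {H : Type*} [NormedAddCommGroup H] [InnerProductSpace ℝ H]

/-- The Rayleigh quotient of `x` with respect to `A`. -/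
def rq (A : H →L[ℝ] H) (x : H) : ℝ := ⟪x, A x⟫ / ⟪x, x⟫

/-- The residual of `x` with respect to `A`. -/
def res (A : H →L[ℝ] H) (x : H) : H := A x - rq A x • x

/-- The acute angle between two vectors. -/
def ang (x y : H) : ℝ := Real.arccos (|⟪x, y⟫| / (‖x‖ * ‖y‖))

theorem aux_coercive_isUnit [CompleteSpace H] (T : H →L[ℝ] H) {ε : ℝ} (hε : 0 < ε)
    (h : ∀ v : H, ε * ‖v‖ ^ 2 ≤ ⟪v, T v⟫) : IsUnit T := by
  refine T.isUnit_of_forall_le_norm_inner_map (c := ⟨ε, hε.le⟩) (by exact_mod_cast hε)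
    (fun v => ?_)
  have h1 := h v
  have h2 : (0:ℝ) ≤ ⟪v, T v⟫ := le_trans (by positivity) h1
  have h3 : ⟪T v, v⟫ = ⟪v, T v⟫ := real_inner_comm _ _
  calc ‖v‖ ^ 2 * ((⟨ε, hε.le⟩ : NNReal) : ℝ) = ε * ‖v‖ ^ 2 := by
        simp [mul_comm]
    _ ≤ ⟪v, T v⟫ := h1
    _ ≤ ‖⟪T v, v⟫‖ := by rw [h3, Real.norm_eq_abs]; exact le_abs_self _

theorem aux_pos_cauchy_schwarz (P : H →L[ℝ] H) (hs : ∀ u v : H, ⟪P u, v⟫ = ⟪u, P v⟫)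
    (hpos : ∀ v : H, 0 ≤ ⟪v, P v⟫) (x : H) :
    ‖P x‖ ^ 2 ≤ ‖P‖ * ⟪x, P x⟫ := by
  have cs : ∀ u w : H, ⟪u, P w⟫ ^ 2 ≤ ⟪u, P u⟫ * ⟪w, P w⟫ := by
    intro u w
    have hwu : ⟪w, P u⟫ = ⟪u, P w⟫ := by rw [← hs, real_inner_comm]
    have key : ∀ t : ℝ, 0 ≤ ⟪w, P w⟫ * (t * t) + (2 * ⟪u, P w⟫) * t + ⟪u, P u⟫ := by
      intro t
      have h0 := hpos (u + t • w)
      have e1 : P (u + t • w) = P u + t • P w := by simp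
      rw [e1, inner_add_left, inner_add_right, inner_add_right, real_inner_smul_left,
        real_inner_smul_left, real_inner_smul_right, real_inner_smul_right, hwu] at h0
      nlinarith [h0]
    have hd := discrim_le_zero key
    rw [discrim] at hd
    nlinarith [hd]
  have h1 := cs x (P x)
  have h2 : ⟪x, P (P x)⟫ = ‖P x‖ ^ 2 := by
    rw [← hs]; exact real_inner_self_eq_norm_sq _
  have h3 : ⟪P x, P (P x)⟫ ≤ ‖P x‖ * (‖P‖ * ‖P x‖) :=
    (real_inner_le_norm _ _).trans (by gcongr; exact P.le_opNorm _)
  rw [h2] at h1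
  rcases eq_or_lt_of_le (norm_nonneg (P x)) with h0 | h0
  · have : ‖P x‖ ^ 2 = 0 := by rw [← h0]; ring
    rw [this]
    exact mul_nonneg (norm_nonneg _) (hpos x)
  · nlinarith [hpos x, norm_nonneg P, h1, mul_le_mul_of_nonneg_left h3 (hpos x), mul_pos h0 h0]

theorem aux_spec_lower_bound [CompleteSpace H] (T : H →L[ℝ] H) (hs : ∀ u v : H, ⟪T u, v⟫ = ⟪u, T v⟫)
    {c : ℝ} (hc : ∀ μ : ℝ, μ < c → IsUnit (T - μ • (1 : H →L[ℝ] H))) (v : H) :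
    c * ‖v‖ ^ 2 ≤ ⟪v, T v⟫ := by
  by_contra hcon
  push_neg at hcon
  have hv : v ≠ 0 := by
    rintro rfl; simp at hcon
  have hvn : (0:ℝ) < ‖v‖ := norm_pos_iff.mpr hv
  set Q : Set ℝ := (fun x : H => ⟪x, T x⟫) '' {x : H | ‖x‖ = 1} with hQdef
  have hu₀ : ‖(‖v‖⁻¹ • v : H)‖ = 1 := by
    rw [norm_smul]; simp [abs_of_pos (inv_pos.mpr hvn), inv_mul_cancel₀ hvn.ne']
  have hne : Q.Nonempty := ⟨_, ⟨_, hu₀, rfl⟩⟩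
  have hbdd : BddBelow Q := by
    refine ⟨-‖T‖, ?_⟩
    rintro q ⟨x, hx, rfl⟩
    simp only [Set.mem_setOf_eq] at hx
    have h1 : |⟪x, T x⟫| ≤ ‖x‖ * ‖T x‖ := abs_real_inner_le_norm _ _
    have h2 : ‖T x‖ ≤ ‖T‖ * ‖x‖ := T.le_opNorm _
    have := neg_abs_le ⟪x, T x⟫
    rw [hx] at h1 h2
    simp only [one_mul, mul_one] at h1 h2
    linarith
  set m := sInf Q with hm
  -- m < c
  have hval : ⟪(‖v‖⁻¹ • v : H), T (‖v‖⁻¹ • v)⟫ = ‖v‖⁻¹ * ‖v‖⁻¹ * ⟪v, T v⟫ := by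
    rw [map_smul, real_inner_smul_left, real_inner_smul_right]; ring
  have hmlt : m < c := by
    have h1 : m ≤ ⟪(‖v‖⁻¹ • v : H), T (‖v‖⁻¹ • v)⟫ := csInf_le hbdd ⟨_, hu₀, rfl⟩
    rw [hval] at h1
    have h2 : ‖v‖⁻¹ * ‖v‖⁻¹ * ⟪v, T v⟫ < c := by
      have hp : (0:ℝ) < ‖v‖⁻¹ * ‖v‖⁻¹ := by positivity
      have he : ‖v‖⁻¹ * ‖v‖⁻¹ * (c * ‖v‖ ^ 2) = c := by
        linear_combination (c * (‖v‖⁻¹ * ‖v‖ + 1)) * inv_mul_cancel₀ hvn.ne'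
      have := (mul_lt_mul_iff_right₀ hp).mpr hcon
      linarith
    linarith
  set P : H →L[ℝ] H := T - m • (1 : H →L[ℝ] H) with hPdef
  have hPapp : ∀ w : H, P w = T w - m • w := by intro w; simp [hPdef]
  have hPinner : ∀ w : H, ⟪w, P w⟫ = ⟪w, T w⟫ - m * ‖w‖ ^ 2 := by
    intro w
    rw [hPapp, inner_sub_right, real_inner_smul_right, real_inner_self_eq_norm_sq]
  have hPs : ∀ u w : H, ⟪P u, w⟫ = ⟪u, P w⟫ := by
    intro u w
    rw [hPapp, hPapp, inner_sub_left, inner_sub_right, real_inner_smul_left,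
      real_inner_smul_right, hs]
  have hPpos : ∀ w : H, 0 ≤ ⟪w, P w⟫ := by
    intro w
    rcases eq_or_ne w 0 with rfl | hw
    · simp
    · have hwn : (0:ℝ) < ‖w‖ := norm_pos_iff.mpr hw
      have hu : ‖(‖w‖⁻¹ • w : H)‖ = 1 := by
        rw [norm_smul]; simp [abs_of_pos (inv_pos.mpr hwn), inv_mul_cancel₀ hwn.ne']
      have h1 : m ≤ ⟪(‖w‖⁻¹ • w : H), T (‖w‖⁻¹ • w)⟫ := csInf_le hbdd ⟨_, hu, rfl⟩
      rw [map_smul, real_inner_smul_left, real_inner_smul_right] at h1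
      rw [hPinner]
      have h2 : m * ‖w‖ ^ 2 ≤ ⟪w, T w⟫ := by
        have := mul_le_mul_of_nonneg_left h1 (le_of_lt (mul_pos hwn hwn))
        have hne' : ‖w‖ ≠ 0 := hwn.ne'
        field_simp at this
        nlinarith [this]
      linarith
  -- unit
  obtain ⟨U, hU⟩ := hc m hmlt
  set Cinv : H →L[ℝ] H := ↑U⁻¹ with hC
  have hCP : ∀ x : H, Cinv (P x) = x := by
    intro x
    have h1 : (Cinv * ↑U) x = x := by rw [U.inv_mul]; simp
    rw [ContinuousLinearMap.mul_apply] at h1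
    rwa [hU] at h1
  have hlower : ∀ x : H, ‖x‖ ≤ ‖Cinv‖ * ‖P x‖ := by
    intro x
    conv_lhs => rw [← hCP x]
    exact Cinv.le_opNorm _
  -- approximate minimizer
  set ε : ℝ := (‖Cinv‖ ^ 2 * ‖P‖ + 1)⁻¹ with hε
  have hεpos : 0 < ε := by positivity
  obtain ⟨q, ⟨u, hu1, rfl⟩, hq⟩ : ∃ q ∈ Q, q < m + ε := by
    apply (csInf_lt_iff hbdd hne).mp
    rw [← hm]; linarith
  simp only [Set.mem_setOf_eq] at hu1
  have hPu : ⟪u, P u⟫ < ε := by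
    rw [hPinner, hu1]; simp only [one_pow, mul_one]; simp only at hq; linarith
  have hcs := aux_pos_cauchy_schwarz P hPs hPpos u
  have h1 : (1:ℝ) ≤ ‖Cinv‖ * ‖P u‖ := by
    have := hlower u; rwa [hu1] at this
  have hPn : (0:ℝ) ≤ ‖P‖ := norm_nonneg _
  have hCn : (0:ℝ) ≤ ‖Cinv‖ := norm_nonneg _
  have h2 : ‖P u‖ ^ 2 ≤ ‖P‖ * ε := le_trans hcs (by nlinarith [hPpos u])
  have h3 : (1:ℝ) ≤ ‖Cinv‖ ^ 2 * ‖P u‖ ^ 2 := by nlinarith [norm_nonneg (P u)]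
  have h4 : ‖Cinv‖ ^ 2 * ‖P‖ * ε < 1 := by
    rw [hε, inv_eq_one_div, mul_one_div, div_lt_one (by positivity)]
    linarith
  nlinarith [sq_nonneg ‖Cinv‖]

set_option maxHeartbeats 1000000 in
set_option synthInstance.maxHeartbeats 400000 in
theorem aux_gap_bound [CompleteSpace H] (A : H →L[ℝ] H) (hA : IsSelfAdjoint A) (α β : ℝ)
    (hαβ : α < β)
    (hαmin : ∀ t ∈ spectrum ℝ A, α ≤ t)
    (hgap : spectrum ℝ A ∩ Set.Ioo α β = ∅)
    (X : Submodule ℝ H)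
    (hX : X = LinearMap.ker ((A - α • (1 : H →L[ℝ] H) : H →L[ℝ] H) : H →ₗ[ℝ] H))
    (w : H) (hw : w ∈ Xᗮ) : β * ‖w‖ ^ 2 ≤ ⟪w, A w⟫ := by
  have hsymA : ∀ u v : H, ⟪A u, v⟫ = ⟪u, A v⟫ :=
    fun u v => (ContinuousLinearMap.isSelfAdjoint_iff_isSymmetric.mp hA) u v
  set S : H →L[ℝ] H := A - α • 1 with hSdef
  set B : H →L[ℝ] H := A - β • 1 with hBdef
  have hSapp : ∀ v : H, S v = A v - α • v := fun v => by simp [hSdef]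
  have hBapp : ∀ v : H, B v = A v - β • v := fun v => by simp [hBdef]
  have hsymS : ∀ u v : H, ⟪S u, v⟫ = ⟪u, S v⟫ := fun u v => by
    rw [hSapp, hSapp, inner_sub_left, inner_sub_right, real_inner_smul_left,
      real_inner_smul_right, hsymA]
  have hsymB : ∀ u v : H, ⟪B u, v⟫ = ⟪u, B v⟫ := fun u v => by
    rw [hBapp, hBapp, inner_sub_left, inner_sub_right, real_inner_smul_left,
      real_inner_smul_right, hsymA]
  have hcomm : Commute S B := by
    rw [hSdef, hBdef]
    have c1 : Commute A A := Commute.refl A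
    have c2 : Commute A (β • (1 : H →L[ℝ] H)) := ((Commute.one_right A).smul_right β)
    have c3 : Commute (α • (1 : H →L[ℝ] H)) A := ((Commute.one_left A).smul_left α)
    have c4 : Commute (α • (1 : H →L[ℝ] H)) (β • (1 : H →L[ℝ] H)) :=
      (((Commute.refl (1 : H →L[ℝ] H)).smul_left α).smul_right β)
    exact (c1.sub_right c2).sub_left (c3.sub_right c4)
  set T : H →L[ℝ] H :=
    Polynomial.aeval A ((Polynomial.X - Polynomial.C α) ^ 2 * (Polynomial.X - Polynomial.C β))
    with hTdef
  have haevS : (Polynomial.aeval A (Polynomial.X - Polynomial.C α) : H →L[ℝ] H) = S := by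
    rw [map_sub, Polynomial.aeval_X, Polynomial.aeval_C, Algebra.algebraMap_eq_smul_one, hSdef]
  have haevB : (Polynomial.aeval A (Polynomial.X - Polynomial.C β) : H →L[ℝ] H) = B := by
    rw [map_sub, Polynomial.aeval_X, Polynomial.aeval_C, Algebra.algebraMap_eq_smul_one, hBdef]
  have hTfact : T = S * S * B := by
    rw [hTdef, map_mul, map_pow, haevS, haevB, sq]
  have hT2 : T = S * (B * S) := by rw [hTfact, mul_assoc, hcomm.eq]
  have hT3 : T = S * (S * B) := by rw [hTfact, mul_assoc]
  have e1 : ∀ v : H, T v = S (S (B v)) := fun v => by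
    rw [hT3]; simp [ContinuousLinearMap.mul_apply]
  have e2 : ∀ v : H, T v = S (B (S v)) := fun v => by
    rw [hT2]; simp [ContinuousLinearMap.mul_apply]
  have e3 : ∀ v : H, B (S (S v)) = S (B (S v)) := by
    intro v
    have hop : B * (S * S) = S * (B * S) := by
      simp only [← mul_assoc, hcomm.eq]
    have := congrArg (fun (f : H →L[ℝ] H) => f v) hop
    simpa [ContinuousLinearMap.mul_apply] using this
  have hsymT : ∀ u v : H, ⟪T u, v⟫ = ⟪u, T v⟫ := by
    intro u v
    rw [e1 u, e2 v, hsymS, hsymS, hsymB, e3]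
  -- linear factor helper
  have hlin : ∀ r : ℝ, (r - α) ^ 2 * (r - β) < 0 →
      IsUnit ((Polynomial.aeval A (Polynomial.X - Polynomial.C r) : H →L[ℝ] H)) := by
    intro r hr
    have hrs : r ∉ spectrum ℝ A := by
      intro hmem
      have h1 := hαmin r hmem
      rcases lt_trichotomy r β with h | h | h
      · rcases eq_or_lt_of_le h1 with h2 | h2
        · rw [← h2] at hr; simp at hr
        · have hmem2 : r ∈ spectrum ℝ A ∩ Set.Ioo α β := ⟨hmem, h2, h⟩
          rw [hgap] at hmem2; exact hmem2
      · rw [h] at hr; simp at hr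
      · nlinarith [sq_nonneg (r - α)]
    have h2 := spectrum.notMem_iff.mp hrs
    have heq : (Polynomial.aeval A (Polynomial.X - Polynomial.C r) : H →L[ℝ] H)
        = -(algebraMap ℝ (H →L[ℝ] H) r - A) := by
      rw [map_sub, Polynomial.aeval_X, Polynomial.aeval_C, neg_sub]
    rw [heq]; exact h2.neg
  -- units below 0
  have hunits : ∀ μ : ℝ, μ < 0 → IsUnit (T - μ • (1 : H →L[ℝ] H)) := by
    intro μ hμ
    set K : ℝ := min (α - 1) (β + μ) with hK
    have hK1 : K ≤ α - 1 := min_le_left _ _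
    have hK2 : K ≤ β + μ := min_le_right _ _
    have hKα : K ≤ α := by linarith
    have hfK : (K - α) ^ 2 * (K - β) - μ ≤ 0 := by
      have h1 : (1:ℝ) ≤ (K - α) ^ 2 := by nlinarith
      have h3 : K - β ≤ 0 := by linarith
      have h4 := mul_le_mul_of_nonpos_right h1 h3
      linarith
    have hfα : (0:ℝ) ≤ (α - α) ^ 2 * (α - β) - μ := by
      simp only [sub_self]; nlinarith
    have hcont : ContinuousOn (fun t : ℝ => (t - α) ^ 2 * (t - β) - μ) (Set.Icc K α) :=
      (Continuous.continuousOn (by continuity))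
    obtain ⟨t₀, ht₀mem, ht₀⟩ := intermediate_value_Icc hKα hcont ⟨hfK, hfα⟩
    have hroot : (t₀ - α) ^ 2 * (t₀ - β) = μ := by
      have h := ht₀
      simp only at h
      linarith
    set b : ℝ := t₀ - 2 * α - β with hb
    set c : ℝ := t₀ * b + α ^ 2 + 2 * α * β with hc0
    have hCb : (Polynomial.C b : Polynomial ℝ)
        = Polynomial.C t₀ - 2 * Polynomial.C α - Polynomial.C β := by
      rw [hb]; simp only [map_sub, map_mul, map_ofNat]
    have hCc : (Polynomial.C c : Polynomial ℝ)
        = Polynomial.C t₀ * Polynomial.C b + Polynomial.C α ^ 2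
          + 2 * Polynomial.C α * Polynomial.C β := by
      rw [hc0]; simp only [map_add, map_mul, map_pow, map_ofNat]
    clear_value b c
    have hCroot : (Polynomial.C t₀ - Polynomial.C α) ^ 2 * (Polynomial.C t₀ - Polynomial.C β)
        = Polynomial.C μ := by
      have h := congrArg (Polynomial.C) hroot
      simpa only [map_mul, map_pow, map_sub] using h
    have hpoly : (Polynomial.X - Polynomial.C α) ^ 2 * (Polynomial.X - Polynomial.C β)
          - Polynomial.C μ
        = (Polynomial.X - Polynomial.C t₀)
          * (Polynomial.X ^ 2 + Polynomial.C b * Polynomial.X + Polynomial.C c) := by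
      rw [hCc, hCb]
      linear_combination hCroot
    have hTμ : T - μ • (1 : H →L[ℝ] H)
        = (Polynomial.aeval A (Polynomial.X - Polynomial.C t₀) : H →L[ℝ] H)
          * (Polynomial.aeval A
              (Polynomial.X ^ 2 + Polynomial.C b * Polynomial.X + Polynomial.C c)) := by
      rw [← map_mul, ← hpoly, map_sub, hTdef, Polynomial.aeval_C,
        Algebra.algebraMap_eq_smul_one]
    have hunit1 : IsUnit (Polynomial.aeval A (Polynomial.X - Polynomial.C t₀) : H →L[ℝ] H) :=
      hlin t₀ (hroot ▸ hμ)
    rcases le_or_gt 0 (b ^ 2 - 4 * c) with hD | hD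
    · -- nonnegative discriminant : two real roots
      have hD' : (0:ℝ) ≤ b ^ 2 - 4 * c := hD
      set s : ℝ := Real.sqrt (b ^ 2 - 4 * c) with hsdef
      have hs : s ^ 2 = b ^ 2 - 4 * c := Real.sq_sqrt hD'
      clear_value s
      set r₁ : ℝ := (-b + s) / 2 with hr₁def
      set r₂ : ℝ := (-b - s) / 2 with hr₂def
      clear_value r₁ r₂
      have hq1 : r₁ ^ 2 + b * r₁ + c = 0 := by rw [hr₁def]; linear_combination hs / 4
      have hq2 : r₂ ^ 2 + b * r₂ + c = 0 := by rw [hr₂def]; linear_combination hs / 4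
      have hsum : r₁ + r₂ = -b := by rw [hr₁def, hr₂def]; ring
      have hprod : r₁ * r₂ = c := by rw [hr₁def, hr₂def]; linear_combination -hs / 4
      have hCsum : Polynomial.C r₁ + Polynomial.C r₂ = -Polynomial.C b := by
        have h := congrArg (Polynomial.C) hsum
        simpa only [map_add, map_neg] using h
      have hCprod : Polynomial.C r₁ * Polynomial.C r₂ = Polynomial.C c := by
        have h := congrArg (Polynomial.C) hprod
        simpa only [map_mul] using h
      have hquadfact : (Polynomial.X ^ 2 + Polynomial.C b * Polynomial.X + Polynomial.C c
            : Polynomial ℝ)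
          = (Polynomial.X - Polynomial.C r₁) * (Polynomial.X - Polynomial.C r₂) := by
        linear_combination Polynomial.X * hCsum - hCprod
      have hval1 : (r₁ - α) ^ 2 * (r₁ - β) = μ := by
        have h := congrArg (Polynomial.eval r₁) hpoly
        simp only [Polynomial.eval_mul, Polynomial.eval_add, Polynomial.eval_sub,
          Polynomial.eval_pow, Polynomial.eval_X, Polynomial.eval_C] at h
        rw [hq1, mul_zero] at h
        linarith
      have hval2 : (r₂ - α) ^ 2 * (r₂ - β) = μ := by
        have h := congrArg (Polynomial.eval r₂) hpoly
        simp only [Polynomial.eval_mul, Polynomial.eval_add, Polynomial.eval_sub,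
          Polynomial.eval_pow, Polynomial.eval_X, Polynomial.eval_C] at h
        rw [hq2, mul_zero] at h
        linarith
      have hunit2 : IsUnit (Polynomial.aeval A (Polynomial.X - Polynomial.C r₁) : H →L[ℝ] H) :=
        hlin r₁ (hval1 ▸ hμ)
      have hunit3 : IsUnit (Polynomial.aeval A (Polynomial.X - Polynomial.C r₂) : H →L[ℝ] H) :=
        hlin r₂ (hval2 ▸ hμ)
      rw [hTμ, hquadfact, map_mul]
      exact hunit1.mul (hunit2.mul hunit3)
    · -- negative discriminant : coercive quadratic
      set E : H →L[ℝ] H :=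
        Polynomial.aeval A (Polynomial.X ^ 2 + Polynomial.C b * Polynomial.X + Polynomial.C c)
        with hEdef
      have hEapp : ∀ v : H, E v = A (A v) + b • A v + c • v := by
        intro v
        rw [hEdef]
        simp [map_add, map_mul, map_pow, Polynomial.aeval_X, Polynomial.aeval_C,
          Algebra.algebraMap_eq_smul_one, pow_two, ContinuousLinearMap.mul_apply,
          ContinuousLinearMap.add_apply, ContinuousLinearMap.smul_apply,
          ContinuousLinearMap.one_apply]
      have hcoer : ∀ v : H, (c - b ^ 2 / 4) * ‖v‖ ^ 2 ≤ ⟪v, E v⟫ := by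
        intro v
        have h2 : ⟪v, E v⟫ = ‖A v‖ ^ 2 + b * ⟪v, A v⟫ + c * ‖v‖ ^ 2 := by
          rw [hEapp, inner_add_right, inner_add_right, real_inner_smul_right,
            real_inner_smul_right, real_inner_self_eq_norm_sq, ← hsymA,
            real_inner_self_eq_norm_sq]
        have h3 : ‖A v + (b / 2) • v‖ ^ 2
            = ‖A v‖ ^ 2 + b * ⟪v, A v⟫ + (b ^ 2 / 4) * ‖v‖ ^ 2 := by
          rw [norm_add_sq_real, real_inner_smul_right, norm_smul, mul_pow,
            Real.norm_eq_abs, sq_abs, real_inner_comm (A v) v]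
          ring
        nlinarith [sq_nonneg ‖A v + (b / 2) • v‖]
      have hunit2 : IsUnit E := aux_coercive_isUnit E (ε := c - b ^ 2 / 4) (by linarith) hcoer
      rw [hTμ]
      exact hunit1.mul hunit2
  have hT0 : ∀ v : H, 0 ≤ ⟪v, T v⟫ := by
    intro v
    have h := aux_spec_lower_bound T hsymT (c := 0) (fun μ hμ => hunits μ hμ) v
    simpa using h
  -- X^⊥ is contained in the closure of the range of S
  have hkermem : ∀ v : H, S v = 0 ↔ v ∈ X := by
    intro v
    rw [hX, LinearMap.mem_ker]
    exact Iff.rfl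
  have hRorth : (LinearMap.range (S : H →ₗ[ℝ] H))ᗮ = X := by
    ext v
    rw [Submodule.mem_orthogonal]
    constructor
    · intro h
      rw [← hkermem]
      have h2 : ⟪S v, S v⟫ = 0 := by
        have h3 := h (S (S v)) ⟨S v, rfl⟩
        rwa [hsymS] at h3
      exact inner_self_eq_zero.mp h2
    · intro hv u hu
      obtain ⟨v', rfl⟩ := hu
      rw [ContinuousLinearMap.coe_coe, hsymS, (hkermem v).mpr hv, inner_zero_right]
  have hclos : (X : Submodule ℝ H)ᗮ ≤ (LinearMap.range (S : H →ₗ[ℝ] H)).topologicalClosure := by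
    rw [← hRorth, Submodule.orthogonal_orthogonal_eq_closure]
  have hg : Continuous (fun u : H => ⟪u, A u⟫ - β * ‖u‖ ^ 2) := by
    apply Continuous.sub
    · exact continuous_id.inner A.continuous
    · exact continuous_const.mul (continuous_norm.pow 2)
  have hsub : ((LinearMap.range (S : H →ₗ[ℝ] H) : Submodule ℝ H) : Set H)
      ⊆ {u : H | 0 ≤ ⟪u, A u⟫ - β * ‖u‖ ^ 2} := by
    rintro _ ⟨v, rfl⟩
    simp only [Set.mem_setOf_eq, ContinuousLinearMap.coe_coe]
    have h1 : ⟪S v, A (S v)⟫ - β * ‖S v‖ ^ 2 = ⟪S v, B (S v)⟫ := by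
      rw [hBapp, inner_sub_right, real_inner_smul_right, real_inner_self_eq_norm_sq]
    rw [h1, hsymS, ← e2]
    exact hT0 v
  have hwmem : w ∈ closure ((LinearMap.range (S : H →ₗ[ℝ] H) : Submodule ℝ H) : Set H) := by
    have h := hclos hw
    rwa [← Submodule.topologicalClosure_coe]
  have hfinal : 0 ≤ ⟪w, A w⟫ - β * ‖w‖ ^ 2 :=
    (closure_minimal hsub (isClosed_le continuous_const hg)) hwmem
  linarith

set_option maxHeartbeats 1000000 in
theorem stmt_18 [CompleteSpace H] (A : H →L[ℝ] H) (hA : IsSelfAdjoint A)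
    (α β : ℝ) (hαβ : α < β)
    (hαmin : ∀ t ∈ spectrum ℝ A, α ≤ t)
    (hβspec : β ∈ spectrum ℝ A)
    (hgap : spectrum ℝ A ∩ Set.Ioo α β = ∅)
    (X : Submodule ℝ H) [HasOrthogonalProjection X]
    (hX : X = LinearMap.ker ((A - α • (1 : H →L[ℝ] H) : H →L[ℝ] H) : H →ₗ[ℝ] H))
    (hXne : X ≠ ⊥)
    (y : H) (hy : y ≠ 0) (hρ₁ : α < rq A y) (hρ₂ : rq A y < β)
    (S : Submodule ℝ H) [FiniteDimensional ℝ S]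
    (hS : S = Submodule.span ℝ ({(orthogonalProjection X y : H), y} : Set H)) :
    (orthogonalProjection X y : H) ≠ 0 ∧ (orthogonalProjection X y : H) ≠ y ∧
    (β - rq A y) * (rq A y - α)
      ≤ ‖(orthogonalProjection S (res A y) : H)‖ ^ 2 / ‖y‖ ^ 2 := by
  have hsymA : ∀ u v : H, ⟪A u, v⟫ = ⟪u, A v⟫ :=
    fun u v => (ContinuousLinearMap.isSelfAdjoint_iff_isSymmetric.mp hA) u v
  set ρ : ℝ := rq A y with hρ
  set x : H := (orthogonalProjection X y : H) with hx
  set z : H := y - x with hzdef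
  have hxX : x ∈ X := SetLike.coe_mem _
  have hzX : z ∈ Xᗮ := Submodule.sub_starProjection_mem_orthogonal (K := X) y
  have hyxz : y = x + z := by rw [hzdef]; abel
  have hAx : A x = α • x := by
    have hk : x ∈ LinearMap.ker ((A - α • (1 : H →L[ℝ] H) : H →L[ℝ] H) : H →ₗ[ℝ] H) := by rw [← hX]; exact hxX
    have h0 : (A - α • (1 : H →L[ℝ] H)) x = 0 := hk
    rw [ContinuousLinearMap.sub_apply, ContinuousLinearMap.smul_apply,
      ContinuousLinearMap.one_apply, sub_eq_zero] at h0
    exact h0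
  have hxz : ⟪x, z⟫ = 0 := (Submodule.mem_orthogonal X z).mp hzX x hxX
  have hy2 : (0:ℝ) < ‖y‖ ^ 2 := pow_pos (norm_pos_iff.mpr hy) 2
  have hyy : ⟪y, y⟫ = ‖y‖ ^ 2 := real_inner_self_eq_norm_sq y
  clear_value ρ x z
  have hyA : ⟪y, A y⟫ = ρ * ‖y‖ ^ 2 := by
    rw [hρ, rq, hyy]
    field_simp
  have hnorm : ‖y‖ ^ 2 = ‖x‖ ^ 2 + ‖z‖ ^ 2 := by
    rw [hyxz, norm_add_sq_real, hxz]; ring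
  have hxAz : ⟪x, A z⟫ = 0 := by
    rw [← hsymA, hAx, real_inner_smul_left, hxz, mul_zero]
  have hzAx : ⟪z, A x⟫ = 0 := by
    rw [hAx, real_inner_smul_right, real_inner_comm, hxz, mul_zero]
  have hxAx : ⟪x, A x⟫ = α * ‖x‖ ^ 2 := by
    rw [hAx, real_inner_smul_right, real_inner_self_eq_norm_sq]
  have hdecomp : ⟪y, A y⟫ = α * ‖x‖ ^ 2 + ⟪z, A z⟫ := by
    conv_lhs => rw [hyxz]
    rw [map_add, inner_add_left, inner_add_right, inner_add_right, hxAx, hxAz, hzAx]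
    ring
  have hβz : ∀ u ∈ Xᗮ, β * ‖u‖ ^ 2 ≤ ⟪u, A u⟫ :=
    fun u hu => aux_gap_bound A hA α β hαβ hαmin hgap X hX u hu
  have hx0 : x ≠ 0 := by
    intro h0
    have hyX : y ∈ Xᗮ := by
      have h1 := hzX
      rw [hzdef, h0, sub_zero] at h1
      exact h1
    have h1 := hβz y hyX
    rw [hyA] at h1
    nlinarith [hy2, hρ₂]
  have hxy : x ≠ y := by
    intro h0
    have hz0 : z = 0 := by rw [hzdef, h0]; simp
    have h1 : ρ * ‖y‖ ^ 2 = α * ‖y‖ ^ 2 := by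
      rw [← hyA, hdecomp, hz0, h0]
      simp
    nlinarith [hy2, hρ₁]
  have hz0 : z ≠ 0 := by
    intro h0
    rw [hzdef, sub_eq_zero] at h0
    exact hxy h0.symm
  have hxn : (0:ℝ) < ‖x‖ ^ 2 := pow_pos (norm_pos_iff.mpr hx0) 2
  have hzn : (0:ℝ) < ‖z‖ ^ 2 := pow_pos (norm_pos_iff.mpr hz0) 2
  have hstar : (β - ρ) * ‖z‖ ^ 2 ≤ (ρ - α) * ‖x‖ ^ 2 := by
    have h1 := hβz z hzX
    have e : ρ * ‖y‖ ^ 2 = ρ * ‖x‖ ^ 2 + ρ * ‖z‖ ^ 2 := by rw [hnorm]; ring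
    linarith [hyA, hdecomp]
  have hyr : ⟪y, res A y⟫ = 0 := by
    simp only [res]
    rw [inner_sub_right, real_inner_smul_right, ← hρ, hyA, hyy]
    ring
  have hxyinner : ⟪x, y⟫ = ‖x‖ ^ 2 := by
    conv_lhs => rw [hyxz]
    rw [inner_add_right, real_inner_self_eq_norm_sq, hxz, add_zero]
  have hxr : ⟪x, res A y⟫ = (α - ρ) * ‖x‖ ^ 2 := by
    simp only [res]
    rw [inner_sub_right, real_inner_smul_right, ← hρ, ← hsymA, hAx, real_inner_smul_left,
      hxyinner]
    ring
  set u : H := x - (‖x‖ ^ 2 / ‖y‖ ^ 2) • y with hu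
  have hur : ⟪u, res A y⟫ = (α - ρ) * ‖x‖ ^ 2 := by
    rw [hu, inner_sub_left, real_inner_smul_left, hxr, hyr]
    ring
  have huu : ‖u‖ ^ 2 = ‖x‖ ^ 2 * ‖z‖ ^ 2 / ‖y‖ ^ 2 := by
    have hzz : ‖z‖ ^ 2 = ‖y‖ ^ 2 - ‖x‖ ^ 2 := by linarith [hnorm]
    rw [hu, norm_sub_sq_real, real_inner_smul_right, hxyinner, norm_smul, mul_pow,
      Real.norm_eq_abs, sq_abs, hzz]
    field_simp
    ring
  have humem : u ∈ S := by
    rw [hS]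
    apply Submodule.sub_mem
    · exact Submodule.subset_span (Set.mem_insert _ _)
    · exact Submodule.smul_mem _ _
        (Submodule.subset_span (Set.mem_insert_of_mem _ rfl))
  set P : H := (orthogonalProjection S (res A y) : H) with hP
  have hresP : ⟪u, res A y⟫ = ⟪u, P⟫ := by
    have hperp : res A y - P ∈ Sᗮ := Submodule.sub_starProjection_mem_orthogonal (K := S) (res A y)
    have h0 : ⟪u, res A y - P⟫ = 0 := (Submodule.mem_orthogonal S _).mp hperp u humem
    rw [inner_sub_right] at h0
    linarith
  clear_value P
  have hcs : ⟪u, P⟫ ^ 2 ≤ ‖u‖ ^ 2 * ‖P‖ ^ 2 := by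
    have h := abs_real_inner_le_norm u P
    have h2 : |⟪u, P⟫| ^ 2 ≤ (‖u‖ * ‖P‖) ^ 2 :=
      pow_le_pow_left₀ (abs_nonneg _) h 2
    calc ⟪u, P⟫ ^ 2 = |⟪u, P⟫| ^ 2 := (sq_abs _).symm
    _ ≤ (‖u‖ * ‖P‖) ^ 2 := h2
    _ = ‖u‖ ^ 2 * ‖P‖ ^ 2 := by ring
  clear_value u
  refine ⟨hx0, hxy, ?_⟩
  have hkey : (ρ - α) ^ 2 * ‖x‖ ^ 4 ≤ ‖x‖ ^ 2 * ‖z‖ ^ 2 / ‖y‖ ^ 2 * ‖P‖ ^ 2 := by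
    have h1 : ⟪u, P⟫ = (α - ρ) * ‖x‖ ^ 2 := by rw [← hresP, hur]
    calc (ρ - α) ^ 2 * ‖x‖ ^ 4 = ((α - ρ) * ‖x‖ ^ 2) ^ 2 := by ring
    _ = ⟪u, P⟫ ^ 2 := by rw [h1]
    _ ≤ ‖u‖ ^ 2 * ‖P‖ ^ 2 := hcs
    _ = _ := by rw [huu]
  rw [le_div_iff₀ hy2]
  have hρα : (0:ℝ) < ρ - α := by linarith
  have h4 : (ρ - α) ^ 2 * ‖x‖ ^ 4 * ‖y‖ ^ 2 ≤ ‖x‖ ^ 2 * ‖z‖ ^ 2 * ‖P‖ ^ 2 := by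
    have h5 := mul_le_mul_of_nonneg_right hkey hy2.le
    have he : ‖x‖ ^ 2 * ‖z‖ ^ 2 / ‖y‖ ^ 2 * ‖P‖ ^ 2 * ‖y‖ ^ 2
        = ‖x‖ ^ 2 * ‖z‖ ^ 2 * ‖P‖ ^ 2 := by
      field_simp
    linarith
  have h6 := mul_le_mul_of_nonneg_left hstar
    (le_of_lt (mul_pos (mul_pos hρα hxn) hy2))
  nlinarith [h4, h6, mul_pos hxn hzn]
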